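/- For every nonnegative integer n and every complex number a not in {0, -1, -2, ...} with a + n + 1 not in {0, -1, -2, ...}, the terminating hypergeometric sum ∑_{k=0}^n [(a)_k (a)_k (-n)_k (1+a/2)_k] / [(1)_k (a/2)_k (n+a+1)_k] · (-1)^k / k! equals (a+1)_n / n!. -/

import Mathlib

open Real Finset

noncomputable def poch (a : ℂ) : ℕ → ℂ
  | 0 => 1
  | (n+1) => poch a n * (a + n)

lemma poch_succ (a : ℂ) (n : ℕ) : poch a (n+1) = poch a n * (a + n) := rfl

lemma poch_succ_left (a : ℂ) (n : ℕ) : poch a (n+1) = a * poch (a+1) n := by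
  induction n with
  | zero => simp [poch]
  | succ m ih =>
    rw [poch_succ, ih, poch_succ]
    push_cast
    ring

lemma poch_one (k : ℕ) : poch 1 k = (Nat.factorial k : ℂ) := by
  induction k with
  | zero => simp [poch]
  | succ m ih =>
    rw [poch_succ, ih, Nat.factorial_succ]
    push_cast
    ring

lemma poch_ne_zero (a : ℂ) (h : ∀ i : ℕ, a + (i : ℂ) ≠ 0) (k : ℕ) : poch a k ≠ 0 := by
  induction k with
  | zero => simp [poch]
  | succ m ih => exact mul_ne_zero ih (h m)

noncomputable def Tm (a : ℂ) (n k : ℕ) : ℂ :=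
  (poch a k * poch a k * poch (-(n : ℂ)) k * poch (1 + a/2) k) /
    (poch 1 k * poch (a/2) k * poch ((n : ℂ) + a + 1) k) * (-1) ^ k / (Nat.factorial k : ℂ)

noncomputable def Hm (a : ℂ) (n k : ℕ) : ℂ :=
  -(a + (n : ℂ) + 1) * (k : ℂ)^2 *
      (poch a k * poch a k * poch (-(n : ℂ) - 1) k * poch (1 + a/2) k) * (-1) ^ k /
    (((n : ℂ) + 1)^2 * (2 * (k : ℂ) + a) * (Nat.factorial k : ℂ)^2 *
      poch (a/2) k * poch ((n : ℂ) + a + 1) k)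

set_option maxHeartbeats 2000000 in
lemma key (a : ℂ) (ha' : ∀ i : ℕ, a + (i : ℂ) ≠ 0) (n k : ℕ) :
    Tm a (n+1) k =
      ((a + (n : ℂ) + 1) / ((n : ℂ) + 1)) * Tm a n k + (Hm a n (k+1) - Hm a n k) := by
  have hn1 : ((n : ℂ) + 1) ≠ 0 := Nat.cast_add_one_ne_zero n
  have hneg : (-(n : ℂ) - 1) ≠ 0 := by intro h; apply hn1; linear_combination -h
  have hna1 : ((n : ℂ) + a + 1) ≠ 0 := by
    intro h; exact ha' (n+1) (by push_cast; linear_combination h)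
  have hfac : (Nat.factorial k : ℂ) ≠ 0 := Nat.cast_ne_zero.mpr (Nat.factorial_ne_zero k)
  have hk1 : ((k : ℂ) + 1) ≠ 0 := Nat.cast_add_one_ne_zero k
  have hp3 : poch (a/2) k ≠ 0 :=
    poch_ne_zero _ (fun i h => ha' (2*i) (by push_cast; linear_combination 2*h)) k
  have hp6 : poch ((n : ℂ) + a + 1) k ≠ 0 :=
    poch_ne_zero _ (fun i h => ha' (n+1+i) (by push_cast; linear_combination h)) k
  have h2k : 2 * (k : ℂ) + a ≠ 0 := by
    intro h; exact ha' (2*k) (by push_cast; linear_combination h)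
  have h2k1 : 2 * ((k : ℂ) + 1) + a ≠ 0 := by
    intro h; exact ha' (2*(k+1)) (by push_cast; linear_combination h)
  have ha2k : a/2 + (k : ℂ) ≠ 0 := by
    intro h; exact ha' (2*k) (by push_cast; linear_combination 2*h)
  have hnak : ((n : ℂ) + a + 1 + (k : ℂ)) ≠ 0 := by
    intro h; exact ha' (n+1+k) (by push_cast; linear_combination h)
  have rel45 : poch (-(n : ℂ) - 1) k * (-(n : ℂ) - 1 + (k : ℂ)) =
      (-(n : ℂ) - 1) * poch (-(n : ℂ)) k := by
    have h1 := poch_succ (-(n : ℂ) - 1) k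
    have h2 := poch_succ_left (-(n : ℂ) - 1) k
    rw [show (-(n : ℂ) - 1 + 1) = -(n : ℂ) from by ring] at h2
    rw [h1] at h2
    exact h2
  have rel67 : ((n : ℂ) + a + 1) * poch ((n : ℂ) + 1 + a + 1) k =
      poch ((n : ℂ) + a + 1) k * ((n : ℂ) + a + 1 + (k : ℂ)) := by
    have h1 := poch_succ ((n : ℂ) + a + 1) k
    have h2 := poch_succ_left ((n : ℂ) + a + 1) k
    rw [show ((n : ℂ) + a + 1 + 1) = (n : ℂ) + 1 + a + 1 from by ring] at h2
    rw [h1] at h2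
    exact h2.symm
  have hp4 : poch (-(n : ℂ)) k =
      poch (-(n : ℂ) - 1) k * (-(n : ℂ) - 1 + (k : ℂ)) / (-(n : ℂ) - 1) := by
    rw [eq_div_iff hneg]; linear_combination -rel45
  have hp7 : poch ((n : ℂ) + 1 + a + 1) k =
      poch ((n : ℂ) + a + 1) k * ((n : ℂ) + a + 1 + (k : ℂ)) / ((n : ℂ) + a + 1) := by
    rw [eq_div_iff hna1]; linear_combination rel67
  unfold Tm Hm
  rw [poch_one, Nat.factorial_succ,
    poch_succ a k, poch_succ (-(n : ℂ) - 1) k, poch_succ (1 + a/2) k,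
    poch_succ (a/2) k, poch_succ ((n : ℂ) + a + 1) k,
    show (-((n+1 : ℕ) : ℂ)) = -(n : ℂ) - 1 from by push_cast; ring,
    show (((n+1 : ℕ) : ℂ) + a + 1) = (n : ℂ) + 1 + a + 1 from by push_cast; ring,
    hp4, hp7, pow_succ (-1 : ℂ) k]
  push_cast
  set p1 := poch a k
  set p2 := poch (1 + a/2) k
  set p3 := poch (a/2) k
  set p5 := poch (-(n : ℂ) - 1) k
  set p6 := poch ((n : ℂ) + a + 1) k
  set F := (Nat.factorial k : ℂ)
  set s := ((-1 : ℂ))^k with hs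
  rw [show -(↑n:ℂ) - 1 = -((↑n:ℂ) + 1) from by ring,
      show 2*((↑k:ℂ)+1) + a = 2*(↑k:ℂ) + a + 2 from by ring]
  set N1 := (↑n:ℂ) + 1 with hN1
  set W := 2*(↑k:ℂ) + a with hW
  set W2 := W + 2 with hW2
  set K1 := (↑k:ℂ) + 1 with hK1
  set A2 := a/2 + (↑k:ℂ) with hA2
  set NA := (↑n:ℂ) + a + 1 with hNA
  set NAK := NA + (↑k:ℂ) with hNAK
  have hw2 : W2 ≠ 0 := by
    rw [hW2, hW]; intro h; exact ha' (2*(k+1)) (by push_cast; linear_combination h)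
  field_simp [hn1, h2k, hw2, hk1, ha2k, hna1, hnak, hp3, hp6, hfac]
  simp only [hW2, hNAK, hN1, hW, hK1, hA2, hNA]
  ring

lemma Tm_top (a : ℂ) (n : ℕ) : Tm a n (n+1) = 0 := by
  unfold Tm
  rw [poch_succ (-(n : ℂ)) n]
  simp

lemma Hm_zero (a : ℂ) (n : ℕ) : Hm a n 0 = 0 := by
  simp [Hm]

lemma Hm_top (a : ℂ) (n : ℕ) : Hm a n (n+2) = 0 := by
  unfold Hm
  rw [show (n+2) = (n+1)+1 from rfl, poch_succ (-(n : ℂ) - 1) (n+1)]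
  push_cast
  rw [show (-(n : ℂ) - 1 + ((n : ℂ) + 1)) = 0 from by ring]
  simp

lemma main_id (a : ℂ) (ha' : ∀ i : ℕ, a + (i : ℂ) ≠ 0) (n : ℕ) :
    ∑ k ∈ Finset.range (n+1), Tm a n k = poch (a + 1) n / (Nat.factorial n : ℂ) := by
  induction n with
  | zero => simp [Tm, poch]
  | succ m ih =>
    have hm1 : ((m : ℂ) + 1) ≠ 0 := Nat.cast_add_one_ne_zero m
    have hfac : (Nat.factorial m : ℂ) ≠ 0 := Nat.cast_ne_zero.mpr (Nat.factorial_ne_zero m)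
    calc ∑ k ∈ Finset.range (m+2), Tm a (m+1) k
        = ∑ k ∈ Finset.range (m+2),
            (((a + (m : ℂ) + 1) / ((m : ℂ) + 1)) * Tm a m k + (Hm a m (k+1) - Hm a m k)) := by
          exact Finset.sum_congr rfl (fun k _ => key a ha' m k)
      _ = ((a + (m : ℂ) + 1) / ((m : ℂ) + 1)) * ∑ k ∈ Finset.range (m+2), Tm a m k
            + (Hm a m (m+2) - Hm a m 0) := by
          rw [Finset.sum_add_distrib, Finset.sum_range_sub (fun k => Hm a m k), ← Finset.mul_sum]
      _ = ((a + (m : ℂ) + 1) / ((m : ℂ) + 1)) * ∑ k ∈ Finset.range (m+1), Tm a m k := by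
          rw [Hm_top, Hm_zero, Finset.sum_range_succ, Tm_top]
          ring
      _ = ((a + (m : ℂ) + 1) / ((m : ℂ) + 1)) * (poch (a + 1) m / (Nat.factorial m : ℂ)) := by
          rw [ih]
      _ = poch (a + 1) (m+1) / (Nat.factorial (m+1) : ℂ) := by
          rw [poch_succ (a+1) m, Nat.factorial_succ]
          push_cast
          field_simp
          ring

theorem stmt3 (n : ℕ) (a : ℂ) (ha : ∀ m : ℕ, a ≠ -(m : ℂ))
    (han : ∀ m : ℕ, a + n + 1 ≠ -(m : ℂ)) :
    ∑ k ∈ Finset.range (n+1),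
      (poch a k * poch a k * poch (-(n : ℂ)) k * poch (1 + a/2) k) /
        (poch 1 k * poch (a/2) k * poch ((n : ℂ) + a + 1) k) * (-1) ^ k / (Nat.factorial k : ℂ)
    = poch (a + 1) n / (Nat.factorial n : ℂ) := by
  have ha' : ∀ i : ℕ, a + (i : ℂ) ≠ 0 := fun i h => ha i (by linear_combination h)
  exact main_id a ha' n
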